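/- Let n ≥ 2, let q ∈ ℂ with q ≠ 0 and q ≠ 1, and let U, V be skew-diagonal n×n complex matrices with z_i := (1+q)·u_i·v^i satisfying z_i·z_{n+1−i} = q for all 1 ≤ i ≤ n. Let G be the Gram matrix of the canonical pairing attached to q, U, V. Then det G = 0 if and only if either z_i = q for some i, or z_{n+1−i}·z_j = q² for some pair i ≠ j with i + j ≠ n+1. -/
import Mathlib

open Matrix

/-- The Gram matrix of the canonical pairing attached to `q`, `U`, `V`: the
`n² × n²` matrix whose entry at row `(i,j)` and column `(k,l)` is
`S_{ki}^{jl} = q·δ_k^j·δ_i^l − (1+q)·u_{ki}·v^{jl}`, where `S` is the TL-type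
operator attached to `q`, `U`, `V`. -/
def gramTL (n : ℕ) (q : ℂ) (U V : Matrix (Fin n) (Fin n) ℂ) :
    Matrix (Fin n × Fin n) (Fin n × Fin n) ℂ :=
  fun p r =>
    q * (if r.1 = p.2 then 1 else 0) * (if p.1 = r.2 then 1 else 0)
      - (1 + q) * U r.1 p.1 * V p.2 r.2

/-- for `n ≥ 2`, `q ≠ 0`, `q ≠ 1`, and skew-diagonal `U`, `V` with
`z_i := (1+q)·u_i·v^i` satisfying `z_i·z_{n+1−i} = q`, the Gram matrix `G` of the
canonical pairing is degenerate (`det G = 0`) iff `z_i = q` for some `i`, or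
`z_{n+1−i}·z_j = q²` for some pair `i ≠ j` with `i + j ≠ n + 1`. -/
theorem gram_det_zero_iff (n : ℕ) (hn : 2 ≤ n) (q : ℂ) (hq0 : q ≠ 0) (hq1 : q ≠ 1)
    (U V : Matrix (Fin n) (Fin n) ℂ)
    (hU0 : ∀ i j : Fin n, j ≠ i.rev → U i j = 0)
    (hV0 : ∀ i j : Fin n, j ≠ i.rev → V i j = 0)
    (z : Fin n → ℂ) (hz : ∀ i : Fin n, z i = (1 + q) * U i i.rev * V i i.rev)
    (hzq : ∀ i : Fin n, z i * z i.rev = q) :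
    (gramTL n q U V).det = 0 ↔
      (∃ i : Fin n, z i = q) ∨
        ∃ i j : Fin n, i ≠ j ∧ j ≠ i.rev ∧ z i.rev * z j = q ^ 2 := by
  classical
  set w : Fin n × Fin n → ℂ := fun p => (1 + q) * U p.1.rev p.1 * V p.2 p.2.rev with hw
  -- entrywise description using skew-diagonality
  have hent : ∀ p r : Fin n × Fin n, gramTL n q U V p r =
      (if (p.2, p.1) = r then q else 0) - (if (p.1.rev, p.2.rev) = r then w p else 0) := by
    rintro ⟨i, j⟩ ⟨k, l⟩
    show q * (if k = j then 1 else 0) * (if i = l then 1 else 0) - (1 + q) * U k i * V j l = _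
    have e1 : q * (if k = j then 1 else 0) * (if i = l then 1 else 0)
        = (if ((j, i) : Fin n × Fin n) = (k, l) then q else 0) := by
      by_cases h : k = j
      · subst h
        by_cases h' : i = l
        · subst h'; simp
        · simp [h', Prod.ext_iff]
      · simp [h, Prod.ext_iff, show ¬j = k from fun hh => h hh.symm]
    have e2 : (1 + q) * U k i * V j l
        = (if ((i.rev, j.rev) : Fin n × Fin n) = (k, l) then w (i, j) else 0) := by
      by_cases h : i.rev = k
      · by_cases h' : j.rev = l
        · subst h; subst h'
          simp [hw]
        · rw [if_neg (by simp [Prod.ext_iff, h']), hV0 j l (fun hh => h' hh.symm)]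
          ring
      · rw [if_neg (by simp [Prod.ext_iff, h]),
          hU0 k i (fun hh => h (by rw [hh, Fin.rev_rev]))]
        ring
    rw [e1, e2]
  -- action on vectors
  have hmv : ∀ (x : Fin n × Fin n → ℂ) (p : Fin n × Fin n),
      (gramTL n q U V).mulVec x p
        = q * x (p.2, p.1) - w p * x (p.1.rev, p.2.rev) := by
    intro x p
    simp [Matrix.mulVec, dotProduct, hent, sub_mul, Finset.sum_sub_distrib,
      ite_mul, Finset.sum_ite_eq]
  -- special values of w
  have hwz : ∀ k : Fin n, w (k.rev, k) = z k := by
    intro k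
    simp only [hw, Fin.rev_rev]
    exact (hz k).symm
  have hwprod : ∀ k l : Fin n, w (l, k) * w (k.rev, l.rev) = z k * z l.rev := by
    intro k l
    rw [hz k, hz l.rev]
    simp only [hw, Fin.rev_rev]
    ring
  rw [← Matrix.exists_mulVec_eq_zero_iff]
  constructor
  · -- degenerate → condition (contrapositive)
    rintro ⟨v, hv0, hv⟩
    by_contra hcon
    push_neg at hcon
    obtain ⟨h1, h2⟩ := hcon
    apply hv0
    have E : ∀ i j : Fin n, q * v (j, i) = w (i, j) * v (i.rev, j.rev) := by
      intro i j
      have := congrFun hv (i, j)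
      rw [hmv] at this
      exact sub_eq_zero.mp this
    funext p
    obtain ⟨k, l⟩ := p
    show v (k, l) = 0
    by_cases hlk : l = k.rev
    · subst hlk
      have e := E k.rev k
      rw [hwz, Fin.rev_rev] at e
      have : (q - z k) * v (k, k.rev) = 0 := by rw [sub_mul, e, sub_self]
      rcases mul_eq_zero.mp this with h | h
      · exact absurd (by linear_combination -h) (h1 k)
      · exact h
    · have e1 := E l k
      have e2 := E k.rev l.rev
      rw [Fin.rev_rev, Fin.rev_rev] at e2
      have key : (q ^ 2 - z k * z l.rev) * v (k, l) = 0 := by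
        have : q * (q * v (k, l)) = w (l, k) * (w (k.rev, l.rev) * v (k, l)) := by
          rw [e1, ← e2]; ring
        calc (q ^ 2 - z k * z l.rev) * v (k, l)
            = q * (q * v (k, l)) - (w (l, k) * w (k.rev, l.rev)) * v (k, l) := by
              rw [hwprod]; ring
          _ = 0 := by rw [this]; ring
      rcases mul_eq_zero.mp key with h | h
      · exfalso
        by_cases hkl : k = l
        · subst hkl
          have : z k * z k.rev = q ^ 2 := by linear_combination -h
          rw [hzq k] at this
          exact hq1 ((mul_left_cancel₀ hq0 (by linear_combination this)).symm)
        · have hne : k.rev ≠ l.rev := fun hh => hkl (by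
            rw [← Fin.rev_rev k, hh, Fin.rev_rev])
          have hne2 : l.rev ≠ (k.rev).rev := by
            rw [Fin.rev_rev]
            exact fun hh => hlk (by rw [← hh, Fin.rev_rev])
          have := h2 k.rev l.rev hne hne2
          rw [Fin.rev_rev] at this
          exact this (by linear_combination -h)
      · exact h
  · -- condition → degenerate: explicit kernel vectors
    rintro (⟨i₀, hi⟩ | ⟨i₀, j₀, hij, hjr, hzz⟩)
    · refine ⟨fun p => if p = (i₀, i₀.rev) then 1 else 0, ?_, ?_⟩
      · intro h
        have := congrFun h (i₀, i₀.rev)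
        simp at this
      · funext p
        obtain ⟨k, l⟩ := p
        rw [hmv, Pi.zero_apply]
        show q * (if ((l, k) : Fin n × Fin n) = (i₀, i₀.rev) then (1:ℂ) else 0)
          - w (k, l) * (if ((k.rev, l.rev) : Fin n × Fin n) = (i₀, i₀.rev) then (1:ℂ) else 0) = 0
        by_cases hp : ((k, l) : Fin n × Fin n) = (i₀.rev, i₀)
        · rw [Prod.mk.injEq] at hp
          obtain ⟨h1', h2'⟩ := hp
          subst h1'; subst h2'
          rw [if_pos (by simp), if_pos (by simp [Fin.rev_rev]), hwz]
          rw [hi]; ring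
        · rw [if_neg, if_neg]
          · ring
          · intro h
            rw [Prod.mk.injEq] at h
            obtain ⟨ha, hb⟩ := h
            have hk : k = i₀.rev := by rw [← ha, Fin.rev_rev]
            have hl : l = i₀ := by rw [← Fin.rev_rev l, hb, Fin.rev_rev]
            exact hp (by rw [hk, hl])
          · intro h
            rw [Prod.mk.injEq] at h
            obtain ⟨ha, hb⟩ := h
            exact hp (by rw [ha, hb])
    · set v : Fin n × Fin n → ℂ := fun p =>
        if p = (j₀, i₀) then w (i₀, j₀) else if p = (i₀.rev, j₀.rev) then q else 0 with hv
      have hsep : ((i₀.rev, j₀.rev) : Fin n × Fin n) ≠ (j₀, i₀) := by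
        simp only [Ne, Prod.mk.injEq, not_and]
        intro ha _
        exact hjr ha.symm
      refine ⟨v, ?_, ?_⟩
      · intro h
        have e1 : v (i₀.rev, j₀.rev) = q := by simp [hv, hsep]
        rw [h] at e1
        exact hq0 (by simpa using e1.symm)
      · funext p
        obtain ⟨k, l⟩ := p
        rw [hmv, Pi.zero_apply, sub_eq_zero]
        show q * v (l, k) = w (k, l) * v (k.rev, l.rev)
        by_cases hp1 : ((k, l) : Fin n × Fin n) = (i₀, j₀)
        · rw [Prod.mk.injEq] at hp1
          obtain ⟨h1', h2'⟩ := hp1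
          subst h1'; subst h2'
          have e0 : v (l, k) = w (k, l) := by simp [hv]
          have e1 : v (k.rev, l.rev) = q := by simp [hv, hsep]
          rw [e0, e1]
          ring
        · by_cases hp2 : ((k, l) : Fin n × Fin n) = (j₀.rev, i₀.rev)
          · rw [Prod.mk.injEq] at hp2
            obtain ⟨h1', h2'⟩ := hp2
            subst h1'; subst h2'
            have e1 : v (i₀.rev, j₀.rev) = q := by simp [hv, hsep]
            have e2 : v (j₀.rev.rev, i₀.rev.rev) = w (i₀, j₀) := by
              simp [hv, Fin.rev_rev]
            rw [e1, e2]
            have hpw := hwprod i₀.rev j₀.rev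
            rw [Fin.rev_rev, Fin.rev_rev] at hpw
            rw [hpw, hzz]
            ring
          · have c1 : ((l, k) : Fin n × Fin n) ≠ (j₀, i₀) := by
              intro h
              rw [Prod.mk.injEq] at h
              obtain ⟨ha, hb⟩ := h
              exact hp1 (by rw [hb, ha])
            have c2 : ((l, k) : Fin n × Fin n) ≠ (i₀.rev, j₀.rev) := by
              intro h
              rw [Prod.mk.injEq] at h
              obtain ⟨ha, hb⟩ := h
              exact hp2 (by rw [hb, ha])
            have c3 : ((k.rev, l.rev) : Fin n × Fin n) ≠ (j₀, i₀) := by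
              intro h
              rw [Prod.mk.injEq] at h
              obtain ⟨ha, hb⟩ := h
              have hk : k = j₀.rev := by rw [← Fin.rev_rev k, ha]
              have hl : l = i₀.rev := by rw [← Fin.rev_rev l, hb]
              exact hp2 (by rw [hk, hl])
            have c4 : ((k.rev, l.rev) : Fin n × Fin n) ≠ (i₀.rev, j₀.rev) := by
              intro h
              rw [Prod.mk.injEq] at h
              obtain ⟨ha, hb⟩ := h
              have hk : k = i₀ := by rw [← Fin.rev_rev k, ha, Fin.rev_rev]
              have hl : l = j₀ := by rw [← Fin.rev_rev l, hb, Fin.rev_rev]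
              exact hp1 (by rw [hk, hl])
            have z1 : v (l, k) = 0 := by simp [hv, c1, c2]
            have z2 : v (k.rev, l.rev) = 0 := by simp [hv, c3, c4]
            rw [z1, z2]
            ring
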